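/- Let y = (y_1,…,y_n) be a list of n positive integers, let y_{n+1} be a positive integer, and let z = (y_1,…,y_n,y_{n+1}). If y is minimally invariant, then every nondecreasing invariant parking assortment x for z is of the form x = (1,1,…,1,w) (n ones followed by a single entry w) for some positive integer w. -/

import Mathlib

open Classical in
/-- One car attempts to park on a one-way street with spots `1, …, m`: given the set
`occ` of occupied spots, the car with preference `p` and length `l` parks in spots
`j, j+1, …, j+l-1` for the least `j ≥ p` such that these spots all exist (are `≤ m`)
and are unoccupied; returns the new set of occupied spots, or `none` if parking fails. -/
noncomputable def parkOne (m : ℕ) (occ : Finset ℕ) (p l : ℕ) : Option (Finset ℕ) :=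
  if h : ∃ j, p ≤ j ∧ j + l ≤ m + 1 ∧ ∀ k ∈ Finset.Ico j (j + l), k ∉ occ then
    some (occ ∪ Finset.Ico (Nat.find h) (Nat.find h + l))
  else none

/-- Run the parking-assortment process for the cars `(preference, length)` in order. -/
noncomputable def parkList (m : ℕ) : List (ℕ × ℕ) → Finset ℕ → Option (Finset ℕ)
  | [], occ => some occ
  | c :: rest, occ => (parkOne m occ c.1 c.2).bind (parkList m rest)

/-- `x` is a parking assortment for the list of car lengths `y`. -/
def IsPA (y x : List ℕ) : Prop :=
  x.length = y.length ∧ (∀ a ∈ x, 1 ≤ a ∧ a ≤ y.sum) ∧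
    (parkList y.sum (x.zip y) ∅).isSome

/-- `PA y` is the set of parking assortments for `y`. -/
def PA (y : List ℕ) : Set (List ℕ) := {x | IsPA y x}

/-- `PAinv y` is the set of (permutation-)invariant parking assortments for `y`:
those preference lists all of whose rearrangements are parking assortments for `y`. -/
def PAinv (y : List ℕ) : Set (List ℕ) := {x | ∀ x', x'.Perm x → IsPA y x'}

/-- `y` is minimally invariant if the all-ones list is the only invariant
parking assortment for `y`. -/
def MinInv (y : List ℕ) : Prop := PAinv y = {List.replicate y.length 1}

def pkPred (m : ℕ) (occ : Finset ℕ) (p l t : ℕ) : Prop :=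
  p ≤ t ∧ t + l ≤ m + 1 ∧ ∀ k ∈ Finset.Ico t (t + l), k ∉ occ

lemma parkOne_some_elim {m p l : ℕ} {occ occ' : Finset ℕ}
    (h : parkOne m occ p l = some occ') :
    ∃ t, pkPred m occ p l t ∧ occ' = occ ∪ Finset.Ico t (t + l) ∧
      ∀ t' < t, ¬ pkPred m occ p l t' := by
  unfold parkOne at h
  split at h
  · next hex =>
    exact ⟨Nat.find hex, Nat.find_spec hex, (Option.some_inj.mp h).symm,
      fun t' ht' => Nat.find_min hex ht'⟩
  · simp at h

lemma parkOne_eq_some_intro {m p l t : ℕ} {occ : Finset ℕ}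
    (ht : pkPred m occ p l t) (hmin : ∀ t' < t, ¬ pkPred m occ p l t') :
    parkOne m occ p l = some (occ ∪ Finset.Ico t (t + l)) := by
  have hex : ∃ j, p ≤ j ∧ j + l ≤ m + 1 ∧ ∀ k ∈ Finset.Ico j (j + l), k ∉ occ := ⟨t, ht⟩
  unfold parkOne
  rw [dif_pos hex]
  have h1 : Nat.find hex = t :=
    le_antisymm (Nat.find_min' hex ht) (le_of_not_gt fun hlt => hmin _ hlt (Nat.find_spec hex))
  rw [h1]

lemma parkList_subset : ∀ (cars : List (ℕ × ℕ)) (occ F : Finset ℕ),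
    parkList m cars occ = some F → occ ⊆ F
  | [], occ, F, h => by simp [parkList] at h; simp [h]
  | c :: rest, occ, F, h => by
    simp only [parkList] at h
    rcases Option.bind_eq_some_iff.mp h with ⟨occ₁, h1, h2⟩
    obtain ⟨t, _, heq, _⟩ := parkOne_some_elim h1
    exact subset_trans (heq ▸ Finset.subset_union_left) (parkList_subset rest occ₁ F h2)

lemma parkList_append (m : ℕ) : ∀ (a b : List (ℕ × ℕ)) (occ : Finset ℕ),
    parkList m (a ++ b) occ = (parkList m a occ).bind (parkList m b)
  | [], b, occ => by simp [parkList]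
  | c :: rest, b, occ => by
    simp only [List.cons_append, parkList]
    rw [Option.bind_assoc]
    congr 1
    funext o
    exact parkList_append m rest b o

lemma parkList_card : ∀ (cars : List (ℕ × ℕ)) (occ F : Finset ℕ),
    parkList m cars occ = some F → F.card = occ.card + (cars.map Prod.snd).sum
  | [], occ, F, h => by simp [parkList] at h; simp [h]
  | c :: rest, occ, F, h => by
    simp only [parkList] at h
    rcases Option.bind_eq_some_iff.mp h with ⟨occ₁, h1, h2⟩
    obtain ⟨t, ht, heq, _⟩ := parkOne_some_elim h1
    have hdisj : Disjoint occ (Finset.Ico t (t + c.2)) := by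
      rw [Finset.disjoint_right]; exact fun k hk => ht.2.2 k hk
    have : occ₁.card = occ.card + c.2 := by
      rw [heq, Finset.card_union_of_disjoint hdisj, Nat.card_Ico]; omega
    rw [parkList_card rest occ₁ F h2, this]
    simp; omega

lemma parkList_range : ∀ (cars : List (ℕ × ℕ)) (occ F : Finset ℕ),
    parkList m cars occ = some F → occ ⊆ Finset.Ico 1 (m + 1) →
    (∀ c ∈ cars, 1 ≤ c.1) → F ⊆ Finset.Ico 1 (m + 1)
  | [], occ, F, h, hocc, _ => by simp [parkList] at h; rwa [← h]
  | c :: rest, occ, F, h, hocc, hp => by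
    simp only [parkList] at h
    rcases Option.bind_eq_some_iff.mp h with ⟨occ₁, h1, h2⟩
    obtain ⟨t, ht, heq, _⟩ := parkOne_some_elim h1
    refine parkList_range rest occ₁ F h2 ?_ (fun c hc => hp c (List.mem_cons_of_mem _ hc))
    rw [heq]
    intro k hk
    rcases Finset.mem_union.mp hk with hk | hk
    · exact hocc hk
    · simp only [Finset.mem_Ico] at hk ⊢
      have hp1 : 1 ≤ c.1 := hp c List.mem_cons_self
      have := ht.1; have := ht.2.1
      omega

lemma parkList_pref_le : ∀ (cars : List (ℕ × ℕ)) (occ F : Finset ℕ),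
    parkList m cars occ = some F → ∀ c ∈ cars, c.1 + c.2 ≤ m + 1
  | [], occ, F, h => by simp
  | c :: rest, occ, F, h => by
    simp only [parkList] at h
    rcases Option.bind_eq_some_iff.mp h with ⟨occ₁, h1, h2⟩
    obtain ⟨t, ht, heq, _⟩ := parkOne_some_elim h1
    intro d hd
    rcases List.mem_cons.mp hd with rfl | hd
    · have := ht.1; have := ht.2.1; omega
    · exact parkList_pref_le rest occ₁ F h2 d hd

lemma parkList_mono_m {m M : ℕ} (hm : m ≤ M) : ∀ (cars : List (ℕ × ℕ)) (occ F : Finset ℕ),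
    parkList M cars occ = some F → F ⊆ Finset.Ico 1 (m + 1) →
    (∀ c ∈ cars, 1 ≤ c.2) → parkList m cars occ = some F
  | [], occ, F, h, _, _ => h
  | c :: rest, occ, F, h, hF, hl => by
    simp only [parkList] at h ⊢
    rcases Option.bind_eq_some_iff.mp h with ⟨occ₁, h1, h2⟩
    obtain ⟨t, ht, heq, hmin⟩ := parkOne_some_elim h1
    have hsub : occ₁ ⊆ F := parkList_subset rest occ₁ F h2
    have hl1 : 1 ≤ c.2 := hl c List.mem_cons_self
    have hmem : t + c.2 - 1 ∈ Finset.Ico t (t + c.2) := by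
      simp only [Finset.mem_Ico]; omega
    have hle : t + c.2 ≤ m + 1 := by
      have : t + c.2 - 1 ∈ F := hsub (heq ▸ Finset.mem_union_right _ hmem)
      have := (Finset.mem_Ico.mp (hF this)).2
      omega
    have hpred : pkPred m occ c.1 c.2 t := ⟨ht.1, hle, ht.2.2⟩
    have hmin' : ∀ t' < t, ¬ pkPred m occ c.1 c.2 t' := fun t' ht' hp' =>
      hmin t' ht' ⟨hp'.1, le_trans hp'.2.1 (by omega), hp'.2.2⟩
    rw [parkOne_eq_some_intro hpred hmin', ← heq, Option.bind_some]
    exact parkList_mono_m hm rest occ₁ F h2 hF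
      (fun d hd => hl d (List.mem_cons_of_mem _ hd))

lemma no_jump {M g j : ℕ} (hg : 1 ≤ g) : ∀ (cars : List (ℕ × ℕ)) (occ F : Finset ℕ),
    parkList M cars occ = some F →
    (∀ k ∈ Finset.Ico j (j + g), k ∉ F) →
    (∀ c ∈ cars, 1 ≤ c.1 ∧ c.1 ≤ j ∧ 1 ≤ c.2) →
    occ ⊆ Finset.Ico 1 j → F ⊆ Finset.Ico 1 j
  | [], occ, F, h, _, _, hocc => by simp [parkList] at h; rwa [← h]
  | c :: rest, occ, F, h, hgap, hc, hocc => by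
    simp only [parkList] at h
    rcases Option.bind_eq_some_iff.mp h with ⟨occ₁, h1, h2⟩
    obtain ⟨t, ht, heq, hmin⟩ := parkOne_some_elim h1
    obtain ⟨hp1, hpj, hl1⟩ := hc c List.mem_cons_self
    have hsub : occ₁ ⊆ F := parkList_subset rest occ₁ F h2
    have hint : Finset.Ico t (t + c.2) ⊆ F := fun k hk =>
      hsub (heq ▸ Finset.mem_union_right _ hk)
    -- show t + c.2 ≤ j
    have htj : t + c.2 ≤ j := by
      by_contra hcon
      push_neg at hcon
      have htge : j + g ≤ t := by
        by_contra hcon2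
        push_neg at hcon2
        have hk1 : max t j ∈ Finset.Ico t (t + c.2) := by
          simp only [Finset.mem_Ico]
          constructor
          · exact le_max_left _ _
          · rcases max_cases t j with ⟨he, _⟩ | ⟨he, _⟩ <;> omega
        have hk2 : max t j ∈ Finset.Ico j (j + g) := by
          simp only [Finset.mem_Ico]
          constructor
          · exact le_max_right _ _
          · rcases max_cases t j with ⟨he, _⟩ | ⟨he, _⟩ <;> omega
        exact hgap _ hk2 (hint hk1)
      have hjt : j < t := by omega
      refine hmin j hjt ⟨hpj, by have := ht.2.1; omega, fun k hk => ?_⟩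
      intro hkocc
      have := Finset.mem_Ico.mp (hocc hkocc)
      have := Finset.mem_Ico.mp hk
      omega
    have hocc₁ : occ₁ ⊆ Finset.Ico 1 j := by
      rw [heq]
      intro k hk
      rcases Finset.mem_union.mp hk with hk | hk
      · exact hocc hk
      · simp only [Finset.mem_Ico] at hk ⊢
        have := ht.1
        omega
    exact no_jump hg rest occ₁ F h2 hgap (fun d hd => hc d (List.mem_cons_of_mem _ hd)) hocc₁

lemma key {y : List ℕ} (hy : ∀ a ∈ y, 0 < a) {yn1 : ℕ} (hyn1 : 0 < yn1)
    {u : List ℕ} {w : ℕ} (hlen : u.length = y.length)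
    (hw : ∀ a ∈ u, a ≤ w)
    (hpa : IsPA (y ++ [yn1]) (u ++ [w])) : IsPA y u := by
  obtain ⟨_, hbd, hrun⟩ := hpa
  set m := y.sum with hm
  have hMsum : (y ++ [yn1]).sum = m + yn1 := by simp [hm]
  rw [hMsum] at hbd
  set M := m + yn1 with hMdef
  -- decompose the run
  rw [List.zip_append hlen, hMsum] at hrun
  rw [Option.isSome_iff_exists] at hrun
  obtain ⟨T, hT⟩ := hrun
  rw [parkList_append] at hT
  rcases Option.bind_eq_some_iff.mp hT with ⟨F, hF, hlast⟩
  simp only [List.zip_cons_cons, List.zip_nil_right, parkList] at hlast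
  rcases Option.bind_eq_some_iff.mp hlast with ⟨T', hT', hT'2⟩
  simp only [parkList, Option.some_inj] at hT'2
  subst hT'2
  obtain ⟨t₀, ht₀, hTeq, _⟩ := parkOne_some_elim hT'
  -- basic facts about cars in u.zip y
  have hcars : ∀ c ∈ u.zip y, 1 ≤ c.1 ∧ c.1 ≤ t₀ ∧ 1 ≤ c.2 := by
    intro c hc
    obtain ⟨hc1, hc2⟩ := List.of_mem_zip (a := c.1) (b := c.2) (by simpa using hc)
    exact ⟨(hbd c.1 (List.mem_append_left _ hc1)).1, le_trans (hw _ hc1) ht₀.1, hy _ hc2⟩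
  -- no car jumps past the gap
  have hFsub : F ⊆ Finset.Ico 1 t₀ :=
    no_jump hyn1 (u.zip y) ∅ F hF (fun k hk => ht₀.2.2 k hk) hcars (by simp)
  have ht₀le : t₀ ≤ m + 1 := by have := ht₀.2.1; omega
  have hFm : F ⊆ Finset.Ico 1 (m + 1) := by
    intro k hk
    have := Finset.mem_Ico.mp (hFsub hk)
    simp only [Finset.mem_Ico]
    omega
  -- run on the short street
  have hsmall : parkList m (u.zip y) ∅ = some F :=
    parkList_mono_m (by omega) (u.zip y) ∅ F hF hFm (fun c hc => (hcars c hc).2.2)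
  refine ⟨hlen, fun a ha => ⟨(hbd a (List.mem_append_left _ ha)).1, ?_⟩, by
    rw [← hm, hsmall]; rfl⟩
  -- a ≤ m via pref bound
  have hamem : a ∈ (u.zip y).map Prod.fst := by
    rw [List.map_fst_zip (le_of_eq hlen)]; exact ha
  obtain ⟨c, hc, hceq⟩ := List.mem_map.mp hamem
  have h1 := parkList_pref_le (u.zip y) ∅ F hsmall c hc
  have h2 := (hcars c hc).2.2
  omega

theorem stmt7 (y : List ℕ) (hy : ∀ a ∈ y, 0 < a) (hne : y ≠ [])
    (hmin : MinInv y) (yn1 : ℕ) (hyn1 : 0 < yn1)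
    (x : List ℕ) (hx : x ∈ PAinv (y ++ [yn1])) (hsort : x.Pairwise (· ≤ ·)) :
    ∃ w, 0 < w ∧ x = List.replicate y.length 1 ++ [w] := by
  set n := y.length with hn
  have hxpa : IsPA (y ++ [yn1]) x := hx x (List.Perm.refl x)
  have hxlen : x.length = n + 1 := by
    have := hxpa.1; simpa using this
  obtain ⟨w, hdrop⟩ : ∃ w, x.drop n = [w] :=
    List.length_eq_one_iff.mp (by rw [List.length_drop, hxlen]; omega)
  have hdec : x = x.take n ++ [w] := by
    conv_lhs => rw [← List.take_append_drop n x]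
    rw [hdrop]
  have hwle : ∀ a ∈ x.take n, a ≤ w := by
    have hs : (x.take n ++ [w]).Pairwise (· ≤ ·) := hdec ▸ hsort
    rw [List.pairwise_append] at hs
    exact fun a ha => hs.2.2 a ha w (by simp)
  have htlen : (x.take n).length = n := by
    rw [List.length_take, hxlen]; omega
  have hclaim : x.take n ∈ PAinv y := by
    intro u'' hperm
    refine key (w := w) hy hyn1 ?_ ?_ ?_
    · rw [hperm.length_eq, htlen]
    · exact fun a ha => hwle a (hperm.mem_iff.mp ha)
    · exact hx (u'' ++ [w]) (hdec ▸ hperm.append_right [w])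
  have htake : x.take n = List.replicate n 1 := by
    have := hmin ▸ hclaim
    simpa using this
  have hwmem : w ∈ x := by rw [hdec]; simp
  exact ⟨w, (hxpa.2.1 w hwmem).1, by rw [hdec, htake]⟩
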